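/- Let u be a Lipschitz function on ℂⁿ with sup|u| + sup|∇u| < ∞, and let [u]_r(z) denote the average of u over the Euclidean ball B_r(z). If u is subharmonic with inf u = 0 and sup u = 1, then for every z ∈ ℂⁿ, lim_{r→∞} [u]_r(z) = 1 and lim_{r→∞} [u²]_r(z) = 1. -/

import Mathlib

open MeasureTheory Metric Filter

/-- Lebesgue measure on `ℂⁿ` with the Euclidean metric. -/
noncomputable instance (m : ℕ) : MeasureSpace (EuclideanSpace ℂ (Fin m)) :=
  letI : MeasurableSpace (EuclideanSpace ℂ (Fin m)) :=
    MeasurableSpace.comap (WithLp.ofLp (p := 2)) (inferInstance : MeasurableSpace (Fin m → ℂ))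
  ⟨Measure.map (WithLp.toLp 2) (volume : Measure (Fin m → ℂ))⟩

instance (n : ℕ) : (volume : Measure (EuclideanSpace ℂ (Fin n))).IsAddHaarMeasure :=
  (PiLp.continuousLinearEquiv 2 ℝ (fun _ : Fin n => ℂ)).symm.isAddHaarMeasure_map _


/-- Let `u` be a bounded Lipschitz subharmonic function on `ℂⁿ` (subharmonicity expressed
by the sub-mean value inequality) with `inf u = 0` and `sup u = 1`.  Then for every `z`,
the ball averages `[u]_r(z)` and `[u²]_r(z)` tend to `1` as `r → ∞`. -/
theorem stmt_16 (n : ℕ) (hn : 1 ≤ n) (u : EuclideanSpace ℂ (Fin n) → ℝ)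
    (hlip : ∃ K : NNReal, LipschitzWith K u)
    (hbdd : ∃ C : ℝ, ∀ z, |u z| ≤ C)
    (hsub : ∀ z r, 0 < r → u z ≤ ⨍ w in Metric.ball z r, u w)
    (hinf : sInf (Set.range u) = 0) (hsup : sSup (Set.range u) = 1) :
    ∀ z, Filter.Tendsto (fun r : ℝ => ⨍ w in Metric.ball z r, u w)
        Filter.atTop (nhds 1) ∧
      Filter.Tendsto (fun r : ℝ => ⨍ w in Metric.ball z r, (u w) ^ 2)
        Filter.atTop (nhds 1) := by
  obtain ⟨K, hK⟩ := hlip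
  obtain ⟨C, hC⟩ := hbdd
  have hcont : Continuous u := hK.continuous
  have hbb : BddBelow (Set.range u) := ⟨-C, by rintro _ ⟨x, rfl⟩; linarith [(abs_le.1 (hC x)).1]⟩
  have hba : BddAbove (Set.range u) := ⟨C, by rintro _ ⟨x, rfl⟩; linarith [(abs_le.1 (hC x)).2]⟩
  have h0 : ∀ x, 0 ≤ u x := fun x => hinf ▸ csInf_le hbb (Set.mem_range_self x)
  have h1 : ∀ x, u x ≤ 1 := fun x => hsup ▸ le_csSup hba (Set.mem_range_self x)
  haveI : Nonempty (Fin n) := ⟨⟨0, hn⟩⟩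
  haveI : Nontrivial (EuclideanSpace ℂ (Fin n)) :=
    inferInstanceAs (Nontrivial (PiLp 2 fun _ : Fin n => ℂ))
  set μ := (volume : Measure (EuclideanSpace ℂ (Fin n))) with hμ
  set k := Module.finrank ℝ (EuclideanSpace ℂ (Fin n)) with hk
  set c := (μ (ball 0 1)).toReal with hc
  have hc0 : 0 < c := ENNReal.toReal_pos (measure_ball_pos μ 0 one_pos).ne'
    (measure_ball_lt_top).ne
  have hball : ∀ (x : EuclideanSpace ℂ (Fin n)) (r : ℝ), 0 ≤ r →
      (μ (ball x r)).toReal = r ^ k * c := by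
    intro x r hr
    rw [Measure.addHaar_ball μ x hr, ENNReal.toReal_mul, ENNReal.toReal_ofReal (by positivity)]
  -- integrability of any continuous bounded function on balls
  have hint : ∀ (f : EuclideanSpace ℂ (Fin n) → ℝ), Continuous f → (∀ x, |f x| ≤ 1) →
      ∀ (x : EuclideanSpace ℂ (Fin n)) (r : ℝ), IntegrableOn f (ball x r) μ := by
    intro f hf hfb x r
    exact Measure.integrableOn_of_bounded measure_ball_lt_top.ne hf.aestronglyMeasurable
      (Filter.Eventually.of_forall fun y => (Real.norm_eq_abs _ ▸ hfb y))
  have hintu : ∀ (x : EuclideanSpace ℂ (Fin n)) (r : ℝ), IntegrableOn u (ball x r) μ :=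
    hint u hcont fun x => abs_le.2 ⟨by linarith [h0 x], h1 x⟩
  have hintu2 : ∀ (x : EuclideanSpace ℂ (Fin n)) (r : ℝ),
      IntegrableOn (fun w => (u w) ^ 2) (ball x r) μ :=
    hint _ (hcont.pow 2) fun x => abs_le.2 ⟨by nlinarith [h0 x, h1 x], by nlinarith [h0 x, h1 x]⟩
  intro z
  -- average as a function
  set A := fun r : ℝ => ⨍ w in ball z r, u w ∂μ with hA
  -- upper bound for averages of functions ≤ 1
  have havg_le : ∀ (f : EuclideanSpace ℂ (Fin n) → ℝ),
      (∀ (x : EuclideanSpace ℂ (Fin n)) (r : ℝ), IntegrableOn f (ball x r) μ) →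
      (∀ x, f x ≤ 1) → ∀ r : ℝ, 0 < r → (⨍ w in ball z r, f w ∂μ) ≤ 1 := by
    intro f hfi hf1 r hr
    rw [setAverage_eq]
    have hM : (μ (ball z r)).toReal = r ^ k * c := hball z r hr.le
    have hMpos : 0 < (μ (ball z r)).toReal := by rw [hM]; positivity
    have : ∫ w in ball z r, f w ∂μ ≤ ∫ _ in ball z r, (1 : ℝ) ∂μ :=
      setIntegral_mono_on (hfi z r) (integrableOn_const measure_ball_lt_top.ne)
        measurableSet_ball fun x _ => hf1 x
    rw [setIntegral_const, smul_eq_mul, mul_one] at this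
    rw [smul_eq_mul]
    calc (μ (ball z r)).toReal⁻¹ * ∫ w in ball z r, f w ∂μ
        ≤ (μ (ball z r)).toReal⁻¹ * (μ (ball z r)).toReal := by
          exact mul_le_mul_of_nonneg_left this (by positivity)
      _ = 1 := inv_mul_cancel₀ hMpos.ne'
  have hAle : ∀ r : ℝ, 0 < r → A r ≤ 1 := fun r hr => havg_le u hintu h1 r hr
  -- main limit for A
  have hAtend : Tendsto A atTop (nhds 1) := by
    rw [tendsto_order]
    constructor
    · intro a ha
      set a' := max a 0 with ha'
      have ha'1 : a' < 1 := max_lt ha one_pos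
      obtain ⟨_, ⟨w, rfl⟩, hw⟩ := exists_lt_of_lt_csSup ⟨u z, Set.mem_range_self z⟩
        (by rw [hsup]; exact ha'1)
      set d := dist w z with hd
      have hd0 : 0 ≤ d := dist_nonneg
      -- the comparison function tends to u w
      have hgt : Tendsto (fun r : ℝ => ((r - d) / r) ^ k * u w) atTop (nhds (u w)) := by
        have h1' : Tendsto (fun r : ℝ => (r - d) / r) atTop (nhds 1) := by
          have : (fun r : ℝ => (r - d) / r) =ᶠ[atTop] fun r => 1 - d * r⁻¹ := by
            filter_upwards [eventually_gt_atTop 0] with r hr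
            field_simp
          rw [tendsto_congr' this]
          have := (tendsto_inv_atTop_zero (𝕜 := ℝ)).const_mul d
          simpa using (tendsto_const_nhds (x := (1:ℝ))).sub this
        have := ((h1'.pow k).mul_const (u w))
        simpa using this
      have hev : ∀ᶠ r : ℝ in atTop, a' < ((r - d) / r) ^ k * u w :=
        hgt.eventually (eventually_gt_nhds hw)
      filter_upwards [hev, eventually_ge_atTop (d + 1)] with r hgr hrd
      have hrd' : 0 < r - d := by linarith
      have hr0 : 0 < r := by linarith
      -- ball inclusion
      have hsubset : ball w (r - d) ⊆ ball z r := by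
        intro x hx
        rw [mem_ball] at hx ⊢
        calc dist x z ≤ dist x w + dist w z := dist_triangle x w z
          _ < (r - d) + d := by rw [← hd]; linarith
          _ = r := by ring
      have hm' : (μ (ball w (r - d))).toReal = (r - d) ^ k * c := hball w _ hrd'.le
      have hM : (μ (ball z r)).toReal = r ^ k * c := hball z r hr0.le
      have hm'pos : 0 < (μ (ball w (r - d))).toReal := by rw [hm']; positivity
      have hMpos : 0 < (μ (ball z r)).toReal := by rw [hM]; positivity
      -- submean at w
      have hsm : u w * (μ (ball w (r - d))).toReal ≤ ∫ x in ball w (r - d), u x ∂μ := by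
        have := hsub w (r - d) hrd'
        rw [setAverage_eq, smul_eq_mul] at this
        calc u w * (μ (ball w (r - d))).toReal
            ≤ ((μ (ball w (r - d))).toReal⁻¹ * ∫ x in ball w (r - d), u x ∂μ) *
              (μ (ball w (r - d))).toReal := by
              exact mul_le_mul_of_nonneg_right this hm'pos.le
          _ = ∫ x in ball w (r - d), u x ∂μ := by
              field_simp
      have hmono : ∫ x in ball w (r - d), u x ∂μ ≤ ∫ x in ball z r, u x ∂μ :=
        setIntegral_mono_set (hintu z r) (Filter.Eventually.of_forall h0)
          (HasSubset.Subset.eventuallyLE hsubset)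
      have key : ((r - d) / r) ^ k * u w ≤ A r := by
        have h2 : u w * ((r - d) ^ k * c) ≤ ∫ x in ball z r, u x ∂μ := by
          calc u w * ((r - d) ^ k * c) = u w * (μ (ball w (r - d))).toReal := by rw [hm']
            _ ≤ ∫ x in ball w (r - d), u x ∂μ := hsm
            _ ≤ _ := hmono
        have hrk : (0:ℝ) < r ^ k := by positivity
        rw [hA]
        show ((r - d) / r) ^ k * u w ≤ ⨍ x in ball z r, u x ∂μ
        rw [setAverage_eq, smul_eq_mul, measureReal_def, hM, div_pow]
        calc (r - d) ^ k / r ^ k * u w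
            = (r ^ k * c)⁻¹ * (u w * ((r - d) ^ k * c)) := by
              field_simp
          _ ≤ (r ^ k * c)⁻¹ * ∫ x in ball z r, u x ∂μ :=
              mul_le_mul_of_nonneg_left h2 (by positivity)
      calc a ≤ a' := le_max_left a 0
        _ < ((r - d) / r) ^ k * u w := hgr
        _ ≤ A r := key
    · intro a ha
      filter_upwards [eventually_gt_atTop 0] with r hr
      exact lt_of_le_of_lt (hAle r hr) ha
  refine ⟨hAtend, ?_⟩
  -- squeeze for u^2
  have hup : Tendsto (fun r => 2 * A r - 1) atTop (nhds 1) := by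
    have := (hAtend.const_mul 2).sub_const 1
    norm_num at this
    exact this
  refine tendsto_of_tendsto_of_tendsto_of_le_of_le' hup hAtend ?_ ?_
  · filter_upwards [eventually_gt_atTop 0] with r hr
    have hM : (μ (ball z r)).toReal = r ^ k * c := hball z r hr.le
    have hMpos : 0 < (μ (ball z r)).toReal := by rw [hM]; positivity
    have hintsub : IntegrableOn (fun w => 2 * u w - 1) (ball z r) μ :=
      ((hintu z r).const_mul 2).sub (integrableOn_const measure_ball_lt_top.ne)
    have hptwise : ∫ x in ball z r, (2 * u x - 1) ∂μ ≤ ∫ x in ball z r, (u x) ^ 2 ∂μ :=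
      setIntegral_mono_on hintsub (hintu2 z r) measurableSet_ball
        (fun x _ => by nlinarith [sq_nonneg (u x - 1)])
    have hval : ∫ x in ball z r, (2 * u x - 1) ∂μ
        = 2 * (∫ x in ball z r, u x ∂μ) - (μ (ball z r)).toReal := by
      rw [integral_sub ((hintu z r).const_mul 2) (integrableOn_const measure_ball_lt_top.ne),
        integral_const_mul, setIntegral_const, smul_eq_mul, mul_one, measureReal_def]
    show 2 * A r - 1 ≤ ⨍ w in ball z r, (u w) ^ 2 ∂μ
    rw [hA]
    show 2 * (⨍ x in ball z r, u x ∂μ) - 1 ≤ ⨍ w in ball z r, (u w) ^ 2 ∂μ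
    rw [setAverage_eq, setAverage_eq, smul_eq_mul, smul_eq_mul]
    have := mul_le_mul_of_nonneg_left hptwise (le_of_lt (inv_pos.2 hMpos))
    calc 2 * ((μ (ball z r)).toReal⁻¹ * ∫ x in ball z r, u x ∂μ) - 1
        = (μ (ball z r)).toReal⁻¹ * (2 * (∫ x in ball z r, u x ∂μ) - (μ (ball z r)).toReal) := by
          field_simp
      _ = (μ (ball z r)).toReal⁻¹ * ∫ x in ball z r, (2 * u x - 1) ∂μ := by rw [hval]
      _ ≤ (μ (ball z r)).toReal⁻¹ * ∫ x in ball z r, (u x) ^ 2 ∂μ := this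
  · filter_upwards [eventually_gt_atTop 0] with r hr
    have : (⨍ w in ball z r, (u w) ^ 2 ∂μ) ≤ ⨍ w in ball z r, u w ∂μ := by
      rw [setAverage_eq, setAverage_eq, smul_eq_mul, smul_eq_mul]
      have hM : (μ (ball z r)).toReal = r ^ k * c := hball z r hr.le
      have hMpos : 0 < (μ (ball z r)).toReal := by rw [hM]; positivity
      refine mul_le_mul_of_nonneg_left ?_ (by positivity)
      exact setIntegral_mono_on (hintu2 z r) (hintu z r) measurableSet_ball
        (fun x _ => by nlinarith [h0 x, h1 x])
    exact this
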